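/- For every real ψ and every real ψ₀ ≠ 0, log(1 + exp ψ) ≤ log(1 + exp ψ₀) + (1/2)(ψ − ψ₀) + (tanh(ψ₀/2)/(4ψ₀))·(ψ² − ψ₀²), with equality when ψ = ψ₀. -/

import Mathlib

open Real Set

private lemma deriv_le_aux {f f' : ℝ → ℝ} {a b : ℝ} (hab : a ≤ b)
    (hf : ∀ x, HasDerivAt f (f' x) x)
    (h' : ∀ x ∈ Set.Ioo a b, 0 ≤ f' x) : f a ≤ f b := by
  have hd : Differentiable ℝ f := fun x => (hf x).differentiableAt
  have := monotoneOn_of_deriv_nonneg (convex_Icc a b) hd.continuous.continuousOn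
    (fun x _ => (hd x).differentiableWithinAt)
    (fun x hx => by
      rw [interior_Icc] at hx
      rw [(hf x).deriv]; exact h' x hx)
  exact this (Set.left_mem_Icc.2 hab) (Set.right_mem_Icc.2 hab) hab

private lemma sinh_le_mul_cosh {x : ℝ} (hx : 0 ≤ x) : Real.sinh x ≤ x * Real.cosh x := by
  have h := deriv_le_aux (f := fun y => y * Real.cosh y - Real.sinh y)
    (f' := fun y => y * Real.sinh y) hx
    (fun y => by
      have : HasDerivAt (fun y => y * Real.cosh y - Real.sinh y)
          (1 * Real.cosh y + y * Real.sinh y - Real.cosh y) y :=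
        ((hasDerivAt_id y).mul (Real.hasDerivAt_cosh y)).sub (Real.hasDerivAt_sinh y)
      convert this using 1; ring)
    (fun y hy => mul_nonneg hy.1.le (by simpa using Real.sinh_le_sinh.2 hy.1.le))
  simpa using h

private lemma mul_sinh_le {p q : ℝ} (hp : 0 ≤ p) (hpq : p ≤ q) :
    q * Real.sinh p ≤ p * Real.sinh q := by
  have h := deriv_le_aux (f := fun x => p * Real.sinh x - x * Real.sinh p)
    (f' := fun x => p * Real.cosh x - Real.sinh p) hpq
    (fun x => by
      have : HasDerivAt (fun x => p * Real.sinh x - x * Real.sinh p)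
          (p * Real.cosh x - 1 * Real.sinh p) x :=
        ((Real.hasDerivAt_sinh x).const_mul p).sub ((hasDerivAt_id x).mul_const _)
      convert this using 1; ring)
    (fun x hx => by
      have h1 : Real.cosh p ≤ Real.cosh x := by
        rw [Real.cosh_le_cosh, abs_of_nonneg hp, abs_of_nonneg (hp.trans hx.1.le)]
        exact hx.1.le
      have h2 := sinh_le_mul_cosh hp
      show 0 ≤ p * Real.cosh x - Real.sinh p
      nlinarith [mul_le_mul_of_nonneg_left h1 hp])
  linarith

private lemma mul_tanh_le {s t : ℝ} (hs : 0 ≤ s) (hst : s ≤ t) :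
    s * Real.tanh t ≤ t * Real.tanh s := by
  have hcs := Real.cosh_pos s
  have hct := Real.cosh_pos t
  rw [Real.tanh_eq_sinh_div_cosh, Real.tanh_eq_sinh_div_cosh,
    mul_div_assoc', mul_div_assoc', div_le_div_iff₀ hct hcs]
  -- goal: s * sinh t * cosh s ≤ t * sinh s * cosh t
  have key := mul_sinh_le (p := t - s) (q := t + s) (by linarith) (by linarith)
  rw [Real.sinh_sub, Real.sinh_add] at key
  nlinarith [key]

private lemma log_cosh_bound {u v : ℝ} (hu : 0 ≤ u) (hv : 0 < v) :
    Real.log (Real.cosh u) ≤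
      Real.log (Real.cosh v) + Real.tanh v / (2 * v) * (u ^ 2 - v ^ 2) := by
  set c : ℝ := Real.tanh v / v with hc
  have hderiv : ∀ x : ℝ, HasDerivAt
      (fun x => Real.log (Real.cosh v) + c / 2 * (x ^ 2 - v ^ 2) - Real.log (Real.cosh x))
      (c * x - Real.tanh x) x := by
    intro x
    have h1 : HasDerivAt (fun x : ℝ => Real.log (Real.cosh x)) (Real.sinh x / Real.cosh x) x :=
      (Real.hasDerivAt_cosh x).log (Real.cosh_pos x).ne'
    have h2 : HasDerivAt (fun x : ℝ => Real.log (Real.cosh v) + c / 2 * (x ^ 2 - v ^ 2))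
        (c / 2 * (2 * x)) x := by
      have := (((hasDerivAt_pow 2 x).sub_const (v ^ 2)).const_mul (c / 2)).const_add
        (Real.log (Real.cosh v))
      refine this.congr_deriv ?_
      norm_num
    have := h2.sub h1
    rw [← Real.tanh_eq_sinh_div_cosh] at this
    exact this.congr_deriv (by ring)
  have goal : 0 ≤ Real.log (Real.cosh v) + c / 2 * (u ^ 2 - v ^ 2) - Real.log (Real.cosh u) := by
    rcases le_total v u with huv | huv
    · have h := deriv_le_aux huv hderiv (fun x hx => by
        have := mul_tanh_le hv.le hx.1.le
        have hx0 : 0 < x := hv.trans hx.1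
        rw [sub_nonneg, hc]
        rw [div_mul_eq_mul_div, le_div_iff₀ hv]
        linarith)
      simpa using h
    · have h := deriv_le_aux (f := fun x =>
          -(Real.log (Real.cosh v) + c / 2 * (x ^ 2 - v ^ 2) - Real.log (Real.cosh x)))
        (f' := fun x => -(c * x - Real.tanh x)) huv
        (fun x => (hderiv x).neg)
        (fun x hx => by
          have hx0 : 0 ≤ x := hu.trans hx.1.le
          have := mul_tanh_le hx0 hx.2.le
          rw [neg_nonneg, sub_nonpos, hc, div_mul_eq_mul_div, div_le_iff₀ hv]
          linarith)
      simpa using h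
  have : c / 2 = Real.tanh v / (2 * v) := by
    rw [hc, div_div, mul_comm]
  linarith [goal, (by rw [← this] : c / 2 * (u ^ 2 - v ^ 2) = Real.tanh v / (2 * v) * (u ^ 2 - v ^ 2))]

private lemma log_one_add_exp (x : ℝ) :
    Real.log (1 + Real.exp x) = x / 2 + Real.log 2 + Real.log (Real.cosh (x / 2)) := by
  have h1 : 1 + Real.exp x = Real.exp (x / 2) * (2 * Real.cosh (x / 2)) := by
    rw [Real.cosh_eq]
    have e1 : Real.exp (x / 2) * Real.exp (x / 2) = Real.exp x := by
      rw [← Real.exp_add]; ring_nf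
    have e2 : Real.exp (x / 2) * Real.exp (-(x / 2)) = 1 := by
      rw [← Real.exp_add]; simp
    linear_combination -e1 - e2
  rw [h1, Real.log_mul (Real.exp_pos _).ne' (by positivity), Real.log_exp,
    Real.log_mul (by norm_num) (Real.cosh_pos _).ne']
  ring

/-- Pólya-gamma quadratic tangent-majorization of the logistic log-partition
function: for every real `ψ` and every `ψ₀ ≠ 0`,
`log(1 + e^ψ) ≤ log(1 + e^{ψ₀}) + (1/2)(ψ − ψ₀) + (tanh(ψ₀/2)/(4ψ₀))·(ψ² − ψ₀²)`,
with equality when `ψ = ψ₀`. -/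
theorem polya_gamma_quadratic_bound (ψ ψ₀ : ℝ) (h : ψ₀ ≠ 0) :
    Real.log (1 + Real.exp ψ) ≤
        Real.log (1 + Real.exp ψ₀) + (1 / 2) * (ψ - ψ₀) +
          (Real.tanh (ψ₀ / 2) / (4 * ψ₀)) * (ψ ^ 2 - ψ₀ ^ 2) ∧
      (ψ = ψ₀ →
        Real.log (1 + Real.exp ψ) =
          Real.log (1 + Real.exp ψ₀) + (1 / 2) * (ψ - ψ₀) +
            (Real.tanh (ψ₀ / 2) / (4 * ψ₀)) * (ψ ^ 2 - ψ₀ ^ 2)) := by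
  constructor
  · set u : ℝ := |ψ / 2| with hu
    set v : ℝ := |ψ₀ / 2| with hv
    have hv0 : 0 < v := abs_pos.2 (by simpa using h)
    have key := log_cosh_bound (u := u) (v := v) (abs_nonneg _) hv0
    have hcu : Real.cosh u = Real.cosh (ψ / 2) := Real.cosh_abs _
    have hcv : Real.cosh v = Real.cosh (ψ₀ / 2) := Real.cosh_abs _
    have hu2 : u ^ 2 = (ψ / 2) ^ 2 := sq_abs _
    have hv2 : v ^ 2 = (ψ₀ / 2) ^ 2 := sq_abs _
    have htv : Real.tanh v / (2 * v) = Real.tanh (ψ₀ / 2) / ψ₀ := by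
      rcases abs_cases (ψ₀ / 2) with ⟨he, _⟩ | ⟨he, _⟩
      · rw [hv, he]; ring_nf
      · rw [hv, he, Real.tanh_neg]
        rw [show ψ₀ = -(2 * -(ψ₀/2)) by ring]
        field_simp
    rw [hcu, hcv, hu2, hv2, htv] at key
    have l1 := log_one_add_exp ψ
    have l2 := log_one_add_exp ψ₀
    have expand : Real.tanh (ψ₀ / 2) / ψ₀ * ((ψ / 2) ^ 2 - (ψ₀ / 2) ^ 2)
        = Real.tanh (ψ₀ / 2) / (4 * ψ₀) * (ψ ^ 2 - ψ₀ ^ 2) := by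
      have h4 : (4 : ℝ) * ψ₀ ≠ 0 := mul_ne_zero (by norm_num) h
      rw [div_mul_eq_mul_div, div_mul_eq_mul_div, div_eq_div_iff h h4]
      ring
    rw [expand] at key
    linarith
  · rintro rfl
    ring
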